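/- For every (t,ρ,x) ∈ (0,∞) × ℝ^m × ∂Δ with t < b(x,ρ), there exists a unique s ∈ (0,1) with B(s,ρ,x) = t. Denoting this value by h(t,ρ,x), for each fixed (ρ,x) the function t ↦ h(t,ρ,x) is strictly increasing on (0, b(x,ρ)). -/

import Mathlib

open MeasureTheory Real Filter Set

noncomputable section

/-- The unit simplex Δ in ℝ^m. -/
def simplex (m : ℕ) : Set (Fin m → ℝ) :=
  {l | (∀ i, 0 ≤ l i) ∧ ∑ i, l i ≤ 1}

/-- ⟨λ̂, log λ̂⟩ = Σ_{i=0}^m λ_i log λ_i, with λ_0 = 1 - Σ λ_i.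
Note `Real.log 0 = 0`, so the convention 0·log 0 = 0 holds. -/
def ent (m : ℕ) (l : Fin m → ℝ) : ℝ :=
  (1 - ∑ i, l i) * Real.log (1 - ∑ i, l i) + ∑ i, l i * Real.log (l i)

/-- b(λ,ρ) = log(1+|e^ρ|) + Σ_{i=0}^m (λ_i log λ_i − ρ_i λ_i), where ρ_0 = 0. -/
def bfun (m : ℕ) (l ρ : Fin m → ℝ) : ℝ :=
  Real.log (1 + ∑ i, Real.exp (ρ i)) + ent m l - ∑ i, ρ i * l i

/-- μ(ρ) : μ_i(ρ) = e^{ρ_i}/(1+|e^ρ|) for i = 1,…,m. -/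
def mu (m : ℕ) (ρ : Fin m → ℝ) : Fin m → ℝ :=
  fun i => Real.exp (ρ i) / (1 + ∑ j, Real.exp (ρ j))

/-- B(s,ρ,x) = b((1−s)μ(ρ) + s x, ρ). -/
def Bfun (m : ℕ) (s : ℝ) (ρ x : Fin m → ℝ) : ℝ :=
  bfun m (fun i => (1 - s) * mu m ρ i + s * x i) ρ

/-- D(t,ρ) = m!·vol({λ ∈ Δ : b(λ,ρ) ≤ t}). -/
def Dfun (m : ℕ) (t : ℝ) (ρ : Fin m → ℝ) : ℝ :=
  (m.factorial : ℝ) * (volume {l ∈ simplex m | bfun m l ρ ≤ t}).toReal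

/-- F_n(ρ) = ∫_{Δ^n} max_j [⟨ρ,λ^j⟩ − ⟨λ̂^j, log λ̂^j⟩] dλ^1⋯dλ^n, each dλ^j = m!·Lebesgue. -/
def Fn (m n : ℕ) (ρ : Fin m → ℝ) : ℝ :=
  ((m.factorial : ℝ)) ^ n *
    ∫ L in {L : Fin n → Fin m → ℝ | ∀ j, L j ∈ simplex m},
      ⨆ j, (∑ i, ρ i * L j i - ent m (L j))

/-- Partial derivative in the variable ρ_p. -/
def pderivR (m : ℕ) (p : Fin m) (f : (Fin m → ℝ) → ℝ) (ρ : Fin m → ℝ) : ℝ :=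
  deriv (fun r => f (Function.update ρ p r)) (ρ p)

/-- H = {(t,ρ,x) ∈ (0,∞) × ℝ^m × ∂Δ : t < b(x,ρ)}. -/
def Hset (m : ℕ) : Set (ℝ × (Fin m → ℝ) × (Fin m → ℝ)) :=
  {q | q.2.2 ∈ frontier (simplex m) ∧ 0 < q.1 ∧ q.1 < bfun m q.2.2 q.2.1}

/- ### Auxiliary lemmas -/

lemma isClosed_simplex (m : ℕ) : IsClosed (simplex m) := by
  have h : simplex m = (⋂ i, {l : Fin m → ℝ | 0 ≤ l i}) ∩ {l | ∑ i, l i ≤ 1} := by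
    ext l; simp [simplex]
  rw [h]
  exact ((isClosed_iInter fun i =>
    isClosed_le continuous_const (continuous_apply i))).inter
    (isClosed_le (continuous_finset_sum _ fun i _ => continuous_apply i) continuous_const)

lemma sum_mu (m : ℕ) (ρ : Fin m → ℝ) :
    ∑ i, mu m ρ i = (∑ j, Real.exp (ρ j)) / (1 + ∑ j, Real.exp (ρ j)) := by
  simp [mu, Finset.sum_div]

lemma mu_nonneg (m : ℕ) (ρ : Fin m → ℝ) (i : Fin m) : 0 ≤ mu m ρ i := by
  have hS : (0:ℝ) < 1 + ∑ j, Real.exp (ρ j) := by positivity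
  exact div_nonneg (Real.exp_nonneg _) hS.le

lemma one_sub_sum_mu_nonneg (m : ℕ) (ρ : Fin m → ℝ) : 0 ≤ 1 - ∑ i, mu m ρ i := by
  have hS : (0:ℝ) < 1 + ∑ j, Real.exp (ρ j) := by positivity
  rw [sum_mu]
  have : (∑ j, Real.exp (ρ j)) / (1 + ∑ j, Real.exp (ρ j)) ≤ 1 := by
    rw [div_le_one hS]; linarith
  linarith

/-- B(0,ρ,x) = b(μ(ρ),ρ) = 0. -/
lemma Bfun_zero (m : ℕ) (ρ x : Fin m → ℝ) : Bfun m 0 ρ x = 0 := by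
  have hS : (0:ℝ) < 1 + ∑ j, Real.exp (ρ j) := by positivity
  set S : ℝ := ∑ j, Real.exp (ρ j) with hSdef
  have hlog : ∀ i, Real.log (mu m ρ i) = ρ i - Real.log (1 + S) := by
    intro i
    rw [show mu m ρ i = Real.exp (ρ i) / (1 + S) from rfl,
      Real.log_div (Real.exp_ne_zero _) (ne_of_gt hS), Real.log_exp]
  have h3 : ∑ i, mu m ρ i * Real.log (mu m ρ i)
      = (∑ i, ρ i * mu m ρ i) - (S / (1 + S)) * Real.log (1 + S) := by
    calc ∑ i, mu m ρ i * Real.log (mu m ρ i)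
        = ∑ i, (ρ i * mu m ρ i - mu m ρ i * Real.log (1 + S)) := by
          refine Finset.sum_congr rfl fun i _ => ?_
          rw [hlog i]; ring
      _ = (∑ i, ρ i * mu m ρ i) - (∑ i, mu m ρ i) * Real.log (1 + S) := by
          rw [Finset.sum_sub_distrib, Finset.sum_mul]
      _ = (∑ i, ρ i * mu m ρ i) - (S / (1 + S)) * Real.log (1 + S) := by
          rw [sum_mu]
  unfold Bfun bfun ent
  simp only [sub_zero, one_mul, zero_mul, add_zero]
  rw [sum_mu, h3]
  have h1 : (1:ℝ) - S / (1 + S) = 1 / (1 + S) := by field_simp; ring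
  have h2 : Real.log (1 / (1 + S)) = - Real.log (1 + S) := by
    rw [one_div, Real.log_inv]
  rw [← hSdef, h1, h2]
  have h4 : 1 / (1 + S) + S / (1 + S) = 1 := by field_simp
  linear_combination (-Real.log (1 + S)) * h4

lemma Bfun_one (m : ℕ) (ρ x : Fin m → ℝ) : Bfun m 1 ρ x = bfun m x ρ := by
  unfold Bfun
  simp

lemma convexOn_finset_sum {ι : Type*} (t : Finset ι) {s : Set ℝ} (hs : Convex ℝ s)
    {f : ι → ℝ → ℝ} (h : ∀ i ∈ t, ConvexOn ℝ s (f i)) :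
    ConvexOn ℝ s (fun x => ∑ i ∈ t, f i x) := by
  classical
  induction t using Finset.induction_on with
  | empty => simp only [Finset.sum_empty]; exact convexOn_const 0 hs
  | insert _ _ hni ih =>
    rename_i a t
    simp only [Finset.sum_insert hni]
    exact (h a (Finset.mem_insert_self a t)).add
      (ih fun i hi => h i (Finset.mem_insert_of_mem hi))

/-- Convexity of s ↦ ((1-s)a + s b) log((1-s)a + s b) on [0,1], for a,b ≥ 0. -/
lemma convexOn_segment_mul_log {a b : ℝ} (ha : 0 ≤ a) (hb : 0 ≤ b) :
    ConvexOn ℝ (Set.Icc (0:ℝ) 1)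
      (fun s => ((1 - s) * a + s * b) * Real.log ((1 - s) * a + s * b)) := by
  have hA : ConvexOn ℝ ((AffineMap.lineMap a b : ℝ →ᵃ[ℝ] ℝ) ⁻¹' (Set.Ici (0:ℝ)))
      ((fun y => y * Real.log y) ∘ (AffineMap.lineMap a b : ℝ →ᵃ[ℝ] ℝ)) :=
    Real.convexOn_mul_log.comp_affineMap _
  have hsub : Set.Icc (0:ℝ) 1 ⊆ (AffineMap.lineMap a b : ℝ →ᵃ[ℝ] ℝ) ⁻¹' (Set.Ici (0:ℝ)) := by
    intro s hs
    simp only [Set.mem_preimage, AffineMap.lineMap_apply_module', Set.mem_Ici, smul_eq_mul]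
    nlinarith [hs.1, hs.2]
  have := hA.subset hsub (convex_Icc 0 1)
  convert this using 2 with s
  simp only [Function.comp_apply, AffineMap.lineMap_apply_module', smul_eq_mul]
  ring_nf

/-- Affine functions are convex. -/
lemma convexOn_affine (c d : ℝ) {s : Set ℝ} (hs : Convex ℝ s) :
    ConvexOn ℝ s (fun x => c * x + d) := by
  refine ⟨hs, fun p _ q _ a b ha hb hab => ?_⟩
  simp only [smul_eq_mul]
  have heq : c * (a * p + b * q) + d = a * (c * p + d) + b * (c * q + d) := by
    linear_combination (-d) * hab
  exact le_of_eq heq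

/-- The representation of B(·,ρ,x) as entropy terms plus an affine function. -/
lemma Bfun_rep (m : ℕ) (ρ x : Fin m → ℝ) (s : ℝ) :
    Bfun m s ρ x =
      ((1 - s) * (1 - ∑ i, mu m ρ i) + s * (1 - ∑ i, x i)) *
        Real.log ((1 - s) * (1 - ∑ i, mu m ρ i) + s * (1 - ∑ i, x i)) +
      (∑ i, ((1 - s) * mu m ρ i + s * x i) * Real.log ((1 - s) * mu m ρ i + s * x i)) +
      (((∑ i, ρ i * mu m ρ i) - ∑ i, ρ i * x i) * s +
        (Real.log (1 + ∑ j, Real.exp (ρ j)) - ∑ i, ρ i * mu m ρ i)) := by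
  have h1 : ∑ i, ((1 - s) * mu m ρ i + s * x i)
      = (1 - s) * (∑ i, mu m ρ i) + s * ∑ i, x i := by
    rw [Finset.sum_add_distrib, Finset.mul_sum, Finset.mul_sum]
  have h2 : ∑ i, ρ i * ((1 - s) * mu m ρ i + s * x i)
      = (1 - s) * (∑ i, ρ i * mu m ρ i) + s * ∑ i, ρ i * x i := by
    rw [Finset.mul_sum, Finset.mul_sum, ← Finset.sum_add_distrib]
    refine Finset.sum_congr rfl fun i _ => ?_
    ring
  unfold Bfun bfun ent
  rw [h1, h2]
  have h3 : (1:ℝ) - ((1 - s) * (∑ i, mu m ρ i) + s * ∑ i, x i)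
      = (1 - s) * (1 - ∑ i, mu m ρ i) + s * (1 - ∑ i, x i) := by ring
  rw [h3]
  ring

lemma convexOn_Bfun (m : ℕ) (ρ x : Fin m → ℝ) (hx : x ∈ simplex m) :
    ConvexOn ℝ (Set.Icc (0:ℝ) 1) (fun s => Bfun m s ρ x) := by
  have h0 : ConvexOn ℝ (Set.Icc (0:ℝ) 1) (fun s =>
      ((1 - s) * (1 - ∑ i, mu m ρ i) + s * (1 - ∑ i, x i)) *
        Real.log ((1 - s) * (1 - ∑ i, mu m ρ i) + s * (1 - ∑ i, x i))) :=
    convexOn_segment_mul_log (one_sub_sum_mu_nonneg m ρ) (by linarith [hx.2])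
  have hsum : ConvexOn ℝ (Set.Icc (0:ℝ) 1) (fun s =>
      ∑ i, ((1 - s) * mu m ρ i + s * x i) * Real.log ((1 - s) * mu m ρ i + s * x i)) :=
    convexOn_finset_sum _ (convex_Icc 0 1)
      (fun i _ => convexOn_segment_mul_log (mu_nonneg m ρ i) (hx.1 i))
  have haff : ConvexOn ℝ (Set.Icc (0:ℝ) 1) (fun s =>
      ((∑ i, ρ i * mu m ρ i) - ∑ i, ρ i * x i) * s +
        (Real.log (1 + ∑ j, Real.exp (ρ j)) - ∑ i, ρ i * mu m ρ i)) :=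
    convexOn_affine _ _ (convex_Icc 0 1)
  have := (h0.add hsum).add haff
  refine (congrArg (ConvexOn ℝ (Set.Icc (0:ℝ) 1)) ?_).mpr this
  funext s
  exact Bfun_rep m ρ x s

lemma continuous_Bfun (m : ℕ) (ρ x : Fin m → ℝ) :
    Continuous (fun s => Bfun m s ρ x) := by
  have h : (fun s => Bfun m s ρ x) = fun s =>
      ((1 - s) * (1 - ∑ i, mu m ρ i) + s * (1 - ∑ i, x i)) *
        Real.log ((1 - s) * (1 - ∑ i, mu m ρ i) + s * (1 - ∑ i, x i)) +
      (∑ i, ((1 - s) * mu m ρ i + s * x i) * Real.log ((1 - s) * mu m ρ i + s * x i)) +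
      (((∑ i, ρ i * mu m ρ i) - ∑ i, ρ i * x i) * s +
        (Real.log (1 + ∑ j, Real.exp (ρ j)) - ∑ i, ρ i * mu m ρ i)) :=
    funext (Bfun_rep m ρ x)
  rw [h]
  refine ((Real.continuous_mul_log.comp (by continuity)).add ?_).add (by continuity)
  exact continuous_finset_sum _ fun i _ =>
    Real.continuous_mul_log.comp (by continuity)

/-- The key convexity inequality: B s₁ ≤ (s₁/s₂)·B s₂ for 0 ≤ s₁ < s₂ ≤ 1. -/
lemma Bfun_key (m : ℕ) (ρ x : Fin m → ℝ) (hx : x ∈ simplex m)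
    {s1 s2 : ℝ} (h0 : 0 ≤ s1) (h12 : s1 < s2) (h1 : s2 ≤ 1) :
    Bfun m s1 ρ x ≤ (s1 / s2) * Bfun m s2 ρ x := by
  have hs2 : 0 < s2 := lt_of_le_of_lt h0 h12
  have hconv := convexOn_Bfun m ρ x hx
  have hb : (0:ℝ) ≤ s1 / s2 := div_nonneg h0 hs2.le
  have ha : (0:ℝ) ≤ 1 - s1 / s2 := by
    have : s1 / s2 < 1 := (div_lt_one hs2).mpr h12
    linarith
  have hmem0 : (0:ℝ) ∈ Set.Icc (0:ℝ) 1 := by constructor <;> norm_num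
  have hmem2 : s2 ∈ Set.Icc (0:ℝ) 1 := ⟨hs2.le, h1⟩
  have := hconv.2 hmem0 hmem2 ha hb (by ring)
  simp only [smul_eq_mul, mul_zero, zero_add] at this
  have heq : (s1 / s2) * s2 = s1 := div_mul_cancel₀ s1 (ne_of_gt hs2)
  rw [heq] at this
  rw [Bfun_zero] at this
  linarith

/-- for 0 < t < b(x,ρ) there is a unique s ∈ (0,1) with B(s,ρ,x) = t,
and the resulting function h(·,ρ,x) is strictly increasing on (0, b(x,ρ)). -/
theorem h_exists_unique_strictMono (m : ℕ) (hm : 1 ≤ m) (ρ : Fin m → ℝ)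
    (x : Fin m → ℝ) (hx : x ∈ frontier (simplex m)) :
    (∀ t : ℝ, 0 < t → t < bfun m x ρ →
      ∃! s : ℝ, s ∈ Set.Ioo (0 : ℝ) 1 ∧ Bfun m s ρ x = t) ∧
    ∀ h : ℝ → ℝ,
      (∀ t : ℝ, 0 < t → t < bfun m x ρ →
        h t ∈ Set.Ioo (0 : ℝ) 1 ∧ Bfun m (h t) ρ x = t) →
      StrictMonoOn h (Set.Ioo 0 (bfun m x ρ)) := by
  have hxs : x ∈ simplex m := by
    have := frontier_subset_closure (s := simplex m) hx
    rwa [(isClosed_simplex m).closure_eq] at this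
  -- basic strict comparison from convexity
  have hlt : ∀ s1 s2 : ℝ, 0 < s1 → s1 < s2 → s2 ≤ 1 → 0 < Bfun m s2 ρ x →
      Bfun m s1 ρ x < Bfun m s2 ρ x := by
    intro s1 s2 h0 h12 h1 hpos
    have hs2 : 0 < s2 := lt_trans h0 h12
    have hk := Bfun_key m ρ x hxs h0.le h12 h1
    have hq : s1 / s2 < 1 := (div_lt_one hs2).mpr h12
    have : (s1 / s2) * Bfun m s2 ρ x < Bfun m s2 ρ x := by
      nlinarith
    linarith
  constructor
  · intro t ht htb
    -- existence via IVT
    have hcont : ContinuousOn (fun s => Bfun m s ρ x) (Set.Icc 0 1) :=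
      (continuous_Bfun m ρ x).continuousOn
    have hivt := intermediate_value_Ioo (zero_le_one) hcont
    have htmem : t ∈ Set.Ioo (Bfun m 0 ρ x) (Bfun m 1 ρ x) := by
      rw [Bfun_zero, Bfun_one]; exact ⟨ht, htb⟩
    obtain ⟨s, hs, hBs⟩ := hivt htmem
    have hBs : Bfun m s ρ x = t := hBs
    refine ⟨s, ⟨hs, hBs⟩, ?_⟩
    rintro s' ⟨hs', hBs'⟩
    by_contra hne
    rcases lt_or_gt_of_ne hne with hlt' | hlt'
    · have := hlt s' s hs'.1 hlt' hs.2.le (by rw [hBs]; exact ht)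
      rw [hBs, hBs'] at this; exact lt_irrefl t this
    · have := hlt s s' hs.1 hlt' hs'.2.le (by rw [hBs']; exact ht)
      rw [hBs, hBs'] at this; exact lt_irrefl t this
  · intro h hh
    intro t1 ht1 t2 ht2 h12
    obtain ⟨hs1m, hB1⟩ := hh t1 ht1.1 ht1.2
    obtain ⟨hs2m, hB2⟩ := hh t2 ht2.1 ht2.2
    by_contra hcon
    push_neg at hcon
    rcases eq_or_lt_of_le hcon with heq | hlt'
    · rw [← heq] at hB1
      rw [hB1] at hB2
      exact absurd hB2 (ne_of_lt h12)
    · have := hlt (h t2) (h t1) hs2m.1 hlt' hs1m.2.le (by rw [hB1]; exact ht1.1)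
      rw [hB1, hB2] at this
      linarith
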